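/- For every real exponent k ≥ 1, the cost function cost(a, b) = |b − a|^k on the reals satisfies the quadrangle inequality and the reverse quadrangle inequality; in particular, for all reals a ≤ b ≤ c ≤ d it holds that (c − a)^k + (d − b)^k ≤ (d − a)^k + (c − b)^k. -/

import Mathlib

open Set

lemma key_quadrangle (k : ℝ) (hk : 1 ≤ k) {x y w z : ℝ} (hx : 0 ≤ x)
    (hxw : x ≤ w) (hwy : w ≤ y) (hsum : w + z = x + y) :
    w ^ k + z ^ k ≤ x ^ k + y ^ k := by
  rcases eq_or_lt_of_le (hxw.trans hwy) with h | h
  · have hwx : w = x := le_antisymm (by linarith [h.ge]) hxw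
    have hzy : z = y := by linarith
    rw [hwx, hzy]
  · have hcv := convexOn_rpow hk
    set θ := (y - w) / (y - x) with hθ
    have hθ0 : 0 ≤ θ := div_nonneg (by linarith) (by linarith)
    have hθ1 : θ ≤ 1 := by
      rw [hθ, div_le_one (by linarith)]; linarith
    have hxne : (y - x) ≠ 0 := ne_of_gt (by linarith)
    have hw : w = θ * x + (1 - θ) * y := by
      rw [hθ]; field_simp; ring
    have hz : z = (1 - θ) * x + θ * y := by
      field_simp [hθ]; nlinarith [hsum]
    have hy0 : (0:ℝ) ≤ y := hx.trans (hxw.trans hwy)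
    have h1 := hcv.2 (mem_Ici.mpr hx) (mem_Ici.mpr hy0) hθ0 (by linarith)
      (by ring : θ + (1 - θ) = 1)
    have h2 := hcv.2 (mem_Ici.mpr hx) (mem_Ici.mpr hy0) (by linarith)
      hθ0 (by ring : (1 - θ) + θ = 1)
    simp only [smul_eq_mul] at h1 h2
    calc w ^ k + z ^ k
        = (θ * x + (1 - θ) * y) ^ k + ((1 - θ) * x + θ * y) ^ k := by rw [hw, hz]
      _ ≤ (θ * x ^ k + (1 - θ) * y ^ k) + ((1 - θ) * x ^ k + θ * y ^ k) :=
          add_le_add h1 h2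
      _ = x ^ k + y ^ k := by ring

/-- for every real exponent `k ≥ 1`, the cost function
`cost a b = |b − a| ^ k` on the reals satisfies the quadrangle inequality and
the reverse quadrangle inequality; in particular, for all reals
`a ≤ b ≤ c ≤ d` one has `(c − a)^k + (d − b)^k ≤ (d − a)^k + (c − b)^k`. -/
theorem abs_rpow_quadrangle (k : ℝ) (hk : 1 ≤ k) :
    (∀ a b c d : ℝ, a ≤ b → b ≤ c → c ≤ d →
      |c - a| ^ k + |d - b| ^ k ≤ |d - a| ^ k + |c - b| ^ k) ∧
    (∀ a b c d : ℝ, d ≤ c → c ≤ b → b ≤ a →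
      |c - a| ^ k + |d - b| ^ k ≤ |d - a| ^ k + |c - b| ^ k) ∧
    (∀ a b c d : ℝ, a ≤ b → b ≤ c → c ≤ d →
      (c - a) ^ k + (d - b) ^ k ≤ (d - a) ^ k + (c - b) ^ k) := by
  refine ⟨?_, ?_, ?_⟩
  · intro a b c d hab hbc hcd
    rw [abs_of_nonneg (by linarith), abs_of_nonneg (by linarith),
      abs_of_nonneg (by linarith), abs_of_nonneg (by linarith)]
    linarith [key_quadrangle k hk (x := c - b) (y := d - a) (w := c - a) (z := d - b)
      (by linarith) (by linarith) (by linarith) (by ring)]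
  · intro a b c d hdc hcb hba
    rw [abs_of_nonpos (by linarith), abs_of_nonpos (by linarith),
      abs_of_nonpos (by linarith), abs_of_nonpos (by linarith)]
    have := key_quadrangle k hk (x := b - c) (y := a - d) (w := a - c) (z := b - d)
      (by linarith) (by linarith) (by linarith) (by ring)
    simp only [neg_sub]
    linarith
  · intro a b c d hab hbc hcd
    linarith [key_quadrangle k hk (x := c - b) (y := d - a) (w := c - a) (z := d - b)
      (by linarith) (by linarith) (by linarith) (by ring)]
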